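/- Let 1 ≤ p < ∞, K ∈ 𝓢(ℝⁿ), 0 < ε < 1, and let U be a neighborhood of 0 in ℝⁿ with ‖osc_U K‖_{L¹} ≤ ε. Let Γ ⊂ ℝⁿ be a regular sampling set with a Γ-tile W ⊆ U. Then for every continuous f ∈ L^p(ℝⁿ) satisfying f(x) = (f * K)(x) for all x, the restriction (f(γ))_{γ∈Γ} belongs to ℓ^p(Γ) and satisfies the sampling inequalities |W|^{−1/p}(1−ε)‖f‖_{L^p} ≤ ‖(f(γ))_{γ∈Γ}‖_{ℓ^p(Γ)} ≤ |W|^{−1/p}(1+ε)‖f‖_{L^p}, where |W| denotes the Lebesgue measure of W. -/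

import Mathlib

open MeasureTheory
open scoped ENNReal NNReal

/-- Convolution `(f * g)(x) = ∫ f(y) g(x − y) dy` on `ℝⁿ`. -/
noncomputable def conv (n : ℕ) (f g : EuclideanSpace ℝ (Fin n) → ℂ) :
    EuclideanSpace ℝ (Fin n) → ℂ :=
  fun x => ∫ y, f y * g (x - y)

/-- `Γ` is a regular sampling set of `ℝⁿ` with `Γ`-tile `W`: `Γ` is countable, `W` is a
relatively compact (= bounded) Borel neighborhood of `0`, the translates `γ + W` cover
`ℝⁿ` up to a null set, and any two distinct translates overlap in a null set. -/
def IsRegSampling (n : ℕ) (Γ W : Set (EuclideanSpace ℝ (Fin n))) : Prop :=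
  Γ.Countable ∧ MeasurableSet W ∧ W ∈ nhds (0 : EuclideanSpace ℝ (Fin n)) ∧
    Bornology.IsBounded W ∧
    volume ((Set.univ : Set (EuclideanSpace ℝ (Fin n))) \ ⋃ γ ∈ Γ, (γ + ·) '' W) = 0 ∧
    Γ.Pairwise fun γ γ' => volume (((γ + ·) '' W) ∩ ((γ' + ·) '' W)) = 0

namespace SamplingAux

variable {n : ℕ}

local notation "E" => EuclideanSpace ℝ (Fin n)

lemma mp_sub_left (x : E) :
    MeasurePreserving (fun y => x - y) (volume : Measure E) volume := by
  have := (measurePreserving_add_left (volume : Measure E) x).comp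
    (Measure.measurePreserving_neg (volume : Measure E))
  simpa [Function.comp_def, sub_eq_add_neg] using this

lemma mp_sub_right (x : E) :
    MeasurePreserving (fun y => y - x) (volume : Measure E) volume := by
  simpa [sub_eq_add_neg] using measurePreserving_add_right (volume : Measure E) (-x)

lemma lint_sub_left (x : E) {g : E → ℝ≥0∞} (hg : Measurable g) :
    ∫⁻ y, g (x - y) = ∫⁻ y, g y :=
  (mp_sub_left x).lintegral_comp hg

lemma lint_sub_right (x : E) {g : E → ℝ≥0∞} (hg : Measurable g) :
    ∫⁻ y, g (y - x) = ∫⁻ y, g y :=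
  (mp_sub_right x).lintegral_comp hg

/-- The oscillation is measurable (being a countable sup of continuous functions). -/
lemma osc_measurable (K : E → ℂ) (hK : Continuous K) (U : Set E) :
    Measurable (fun x => ⨆ y ∈ U, (‖K x - K (x - y)‖₊ : ℝ≥0∞)) := by
  obtain ⟨t, htU, htc, htd⟩ :=
    (TopologicalSpace.IsSeparable.of_separableSpace U).exists_countable_dense_subset
  have hcont : ∀ x : E, Continuous fun z : E => (‖K x - K (x - z)‖₊ : ℝ≥0∞) := fun x =>
    ENNReal.continuous_coe.comp
      ((continuous_const.sub (hK.comp (continuous_const.sub continuous_id))).nnnorm)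
  have key : ∀ x : E, (⨆ y ∈ U, (‖K x - K (x - y)‖₊ : ℝ≥0∞))
      = ⨆ y ∈ t, (‖K x - K (x - y)‖₊ : ℝ≥0∞) := by
    intro x
    refine le_antisymm (iSup₂_le fun y hy => ?_) (iSup₂_le fun y hy => le_iSup₂ (f := fun y (_ : y ∈ U) => (‖K x - K (x - y)‖₊ : ℝ≥0∞)) y (htU hy))
    set S := ⨆ y ∈ t, (‖K x - K (x - y)‖₊ : ℝ≥0∞) with hS
    have hcl : IsClosed {z : E | (‖K x - K (x - z)‖₊ : ℝ≥0∞) ≤ S} :=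
      isClosed_le (hcont x) continuous_const
    have hsub : t ⊆ {z : E | (‖K x - K (x - z)‖₊ : ℝ≥0∞) ≤ S} := fun d hd => le_iSup₂ (f := fun y (_ : y ∈ t) => (‖K x - K (x - y)‖₊ : ℝ≥0∞)) d hd
    exact (hcl.closure_subset_iff.2 hsub) (htd hy)
  simp only [funext key]
  refine Measurable.biSup t htc fun d _ => ?_
  have : Continuous fun x : E => (‖K x - K (x - d)‖₊ : ℝ≥0∞) :=
    ENNReal.continuous_coe.comp ((hK.sub (hK.comp (continuous_id.sub continuous_const))).nnnorm)
  exact this.measurable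

/-- A Schwartz function is in every `L^r`, `1 ≤ r`. -/
lemma schwartz_memLp (K : SchwartzMap E ℂ) (r : ℝ≥0∞) (hr : 1 ≤ r) :
    MemLp (⇑K) r (volume : Measure E) := by
  obtain ⟨M, hM0, hM⟩ := K.decay 0 0
  have hMb : ∀ x : E, ‖K x‖ ≤ M := by
    intro x; have := hM x; simpa [norm_iteratedFDeriv_zero] using this
  rcases eq_or_ne r ∞ with rfl | hrT
  · exact memLp_top_of_bound K.continuous.aestronglyMeasurable M (ae_of_all _ hMb)
  · have hr0 : r ≠ 0 := by intro h; simp [h] at hr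
    have ht1 : 1 ≤ r.toReal := by
      rw [← ENNReal.toReal_one]
      exact ENNReal.toReal_mono hrT hr
    set t := r.toReal with htdef
    have ht0 : 0 < t := lt_of_lt_of_le one_pos ht1
    refine ⟨K.continuous.aestronglyMeasurable, ?_⟩
    rw [eLpNorm_eq_lintegral_rpow_enorm_toReal hr0 hrT]
    rw [ENNReal.rpow_lt_top_iff_of_pos (by positivity)]
    have hpt : ∀ x : E, (‖K x‖₊ : ℝ≥0∞) ^ t ≤ ENNReal.ofReal M ^ (t - 1) * (‖K x‖₊ : ℝ≥0∞) := by
      intro x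
      have h1 : (‖K x‖₊ : ℝ≥0∞) ^ t
          = (‖K x‖₊ : ℝ≥0∞) ^ (t - 1) * (‖K x‖₊ : ℝ≥0∞) ^ (1 : ℝ) := by
        rw [← ENNReal.rpow_add_of_nonneg _ _ (by linarith) zero_le_one]
        norm_num
      rw [h1, ENNReal.rpow_one]
      exact mul_le_mul_left (ENNReal.rpow_le_rpow (by
        rw [← enorm_eq_nnnorm, ← ofReal_norm_eq_enorm]
        exact ENNReal.ofReal_le_ofReal (hMb x)) (by linarith)) _
    calc ∫⁻ x, (‖K x‖₊ : ℝ≥0∞) ^ t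
        ≤ ∫⁻ x, ENNReal.ofReal M ^ (t - 1) * (‖K x‖₊ : ℝ≥0∞) := lintegral_mono hpt
      _ = ENNReal.ofReal M ^ (t - 1) * ∫⁻ x, (‖K x‖₊ : ℝ≥0∞) := lintegral_const_mul _
          K.continuous.measurable.nnnorm.coe_nnreal_ennreal
      _ < ∞ := ENNReal.mul_lt_top (ENNReal.rpow_lt_top_of_nonneg (by linarith)
            ENNReal.ofReal_ne_top) K.integrable.2

/-- Young's inequality for `L^p * L^1`, in `ℝ≥0∞` form. -/
lemma young_L1 (p : ℝ) (hp : 1 ≤ p) (F Φ : E → ℝ≥0∞) (hF : Measurable F) (hΦ : Measurable Φ) :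
    (∫⁻ x, (∫⁻ y, F y * Φ (x - y)) ^ p) ^ (1 / p) ≤
      (∫⁻ x, Φ x) * (∫⁻ x, F x ^ p) ^ (1 / p) := by
  have hp0 : (0 : ℝ) < p := lt_of_lt_of_le one_pos hp
  have hΦm : ∀ x : E, Measurable fun y : E => Φ (x - y) := fun x =>
    hΦ.comp (measurable_const.sub measurable_id)
  have hΦm' : ∀ y : E, Measurable fun x : E => Φ (x - y) := fun y =>
    hΦ.comp (measurable_id.sub measurable_const)
  have hswap : ∀ G : E → ℝ≥0∞, Measurable G →
      ∫⁻ x, ∫⁻ y, G y * Φ (x - y) = (∫⁻ y, G y) * ∫⁻ x, Φ x := by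
    intro G hG
    rw [lintegral_lintegral_swap]
    · have h1 : ∀ y : E, ∫⁻ x, G y * Φ (x - y) = G y * ∫⁻ x, Φ x := by
        intro y
        rw [lintegral_const_mul _ (hΦm' y), lint_sub_right y hΦ]
      simp_rw [h1]
      rw [lintegral_mul_const _ hG]
    · exact ((hG.comp measurable_snd).mul
        (hΦ.comp (measurable_fst.sub measurable_snd))).aemeasurable
  by_cases hF0 : ∫⁻ x, F x ^ p = 0
  · -- F = 0 a.e., so LHS = 0
    have hFz : ∀ᵐ x : E, F x = 0 := by
      have := (lintegral_eq_zero_iff (hF.pow_const p)).1 hF0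
      filter_upwards [this] with x hx
      rcases ENNReal.rpow_eq_zero_iff.1 hx with ⟨h, _⟩ | ⟨_, hneg⟩
      · exact h
      · linarith
    have hinner : ∀ x : E, (∫⁻ y, F y * Φ (x - y)) = 0 := by
      intro x
      rw [← lintegral_zero]
      refine lintegral_congr_ae ?_
      filter_upwards [hFz] with y hy
      simp [hy]
    simp_rw [hinner]
    rw [ENNReal.zero_rpow_of_pos hp0]
    simp only [lintegral_zero]
    rw [ENNReal.zero_rpow_of_pos (by positivity : (0:ℝ) < 1 / p)]
    exact bot_le
  rcases eq_or_ne (∫⁻ x, Φ x) ∞ with hΦT | hΦT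
  · rw [hΦT, ENNReal.top_mul]
    · exact le_top
    · simp only [ne_eq, ENNReal.rpow_eq_zero_iff, not_or, not_and, not_lt]
      constructor
      · intro h; exact absurd h hF0
      · intro _; positivity
  rcases eq_or_lt_of_le hp with rfl | hp1
  · simp only [ENNReal.rpow_one, one_div_one]
    rw [hswap F hF]
    ring_nf
    exact le_rfl
  · -- 1 < p
    set q := Real.conjExponent p with hq
    have hpq : Real.HolderConjugate p q := Real.HolderConjugate.conjExponent hp1
    have hq0 : (0 : ℝ) < q := hpq.symm.pos
    have hqdiv : p / q = p - 1 := by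
      rw [hq, Real.conjExponent]
      rw [div_div_eq_mul_div, mul_comm, mul_div_assoc, div_self (by positivity), mul_one]
    have hstep : ∀ x : E, (∫⁻ y, F y * Φ (x - y)) ≤
        (∫⁻ y, F y ^ p * Φ (x - y)) ^ (1 / p) * (∫⁻ z, Φ z) ^ (1 / q) := by
      intro x
      have hrw : ∀ y : E, F y * Φ (x - y)
          = (F y * Φ (x - y) ^ (1 / p)) * Φ (x - y) ^ (1 / q) := by
        intro y
        rw [mul_assoc, ← ENNReal.rpow_add_of_nonneg _ _ (by positivity) (by positivity)]
        rw [one_div, one_div, hpq.inv_add_inv_eq_one, ENNReal.rpow_one]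
      calc (∫⁻ y, F y * Φ (x - y))
          = ∫⁻ y, (F y * Φ (x - y) ^ (1 / p)) * Φ (x - y) ^ (1 / q) := by simp_rw [hrw]
        _ ≤ (∫⁻ y, (F y * Φ (x - y) ^ (1 / p)) ^ p) ^ (1 / p) *
            (∫⁻ y, (Φ (x - y) ^ (1 / q)) ^ q) ^ (1 / q) :=
            ENNReal.lintegral_mul_le_Lp_mul_Lq (volume : Measure E) hpq
              (hF.mul ((hΦm x).pow_const _)).aemeasurable
              ((hΦm x).pow_const _).aemeasurable
        _ = (∫⁻ y, F y ^ p * Φ (x - y)) ^ (1 / p) * (∫⁻ z, Φ z) ^ (1 / q) := by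
            congr 2
            · refine lintegral_congr fun y => ?_
              rw [ENNReal.mul_rpow_of_nonneg _ _ (le_of_lt hp0), ← ENNReal.rpow_mul,
                one_div_mul_cancel (ne_of_gt hp0), ENNReal.rpow_one]
            · have h2 : ∀ y : E, (Φ (x - y) ^ (1 / q)) ^ q = Φ (x - y) := by
                intro y
                rw [← ENNReal.rpow_mul, one_div_mul_cancel (ne_of_gt hq0), ENNReal.rpow_one]
              simp_rw [h2]
              exact lint_sub_left x hΦ
    have hstep2 : ∀ x : E, (∫⁻ y, F y * Φ (x - y)) ^ p ≤
        (∫⁻ y, F y ^ p * Φ (x - y)) * (∫⁻ z, Φ z) ^ (p / q) := by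
      intro x
      calc (∫⁻ y, F y * Φ (x - y)) ^ p
          ≤ ((∫⁻ y, F y ^ p * Φ (x - y)) ^ (1 / p) * (∫⁻ z, Φ z) ^ (1 / q)) ^ p :=
            ENNReal.rpow_le_rpow (hstep x) (le_of_lt hp0)
        _ = (∫⁻ y, F y ^ p * Φ (x - y)) * (∫⁻ z, Φ z) ^ (p / q) := by
            rw [ENNReal.mul_rpow_of_nonneg _ _ (le_of_lt hp0), ← ENNReal.rpow_mul,
              ← ENNReal.rpow_mul, one_div_mul_cancel (ne_of_gt hp0), ENNReal.rpow_one]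
            congr 2
            field_simp
    calc (∫⁻ x, (∫⁻ y, F y * Φ (x - y)) ^ p) ^ (1 / p)
        ≤ (∫⁻ x, (∫⁻ y, F y ^ p * Φ (x - y)) * (∫⁻ z, Φ z) ^ (p / q)) ^ (1 / p) :=
          ENNReal.rpow_le_rpow (lintegral_mono hstep2) (by positivity)
      _ = ((∫⁻ y, F y ^ p) * (∫⁻ z, Φ z) * (∫⁻ z, Φ z) ^ (p / q)) ^ (1 / p) := by
          rw [lintegral_mul_const' _ _ (ENNReal.rpow_ne_top_of_nonneg (by positivity) hΦT),
            hswap (fun y => F y ^ p) (hF.pow_const _)]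
      _ = ((∫⁻ y, F y ^ p) * (∫⁻ z, Φ z) ^ p) ^ (1 / p) := by
          rw [mul_assoc]
          congr 1
          have h3 : (∫⁻ z, Φ z) * (∫⁻ z, Φ z) ^ (p / q)
              = (∫⁻ z, Φ z) ^ (1 + p / q) := by
            rw [ENNReal.rpow_add_of_nonneg _ _ zero_le_one (by positivity),
              ENNReal.rpow_one]
          rw [h3]
          congr 1
          rw [hqdiv]; ring
      _ = (∫⁻ z, Φ z) * (∫⁻ x, F x ^ p) ^ (1 / p) := by
          rw [ENNReal.mul_rpow_of_nonneg _ _ (by positivity), ← ENNReal.rpow_mul,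
            mul_one_div_cancel (ne_of_gt hp0), ENNReal.rpow_one, mul_comm]

end SamplingAux

open SamplingAux

theorem sampling_inequality_Lp (n : ℕ) (p : ℝ) (hp : 1 ≤ p)
    (K : SchwartzMap (EuclideanSpace ℝ (Fin n)) ℂ)
    (ε : ℝ) (hε0 : 0 < ε) (hε1 : ε < 1)
    (U : Set (EuclideanSpace ℝ (Fin n))) (hU : U ∈ nhds (0 : EuclideanSpace ℝ (Fin n)))
    (hosc : (∫⁻ x, ⨆ y ∈ U, (‖K x - K (x - y)‖₊ : ℝ≥0∞)) ≤ ENNReal.ofReal ε)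
    (Γ W : Set (EuclideanSpace ℝ (Fin n))) (hreg : IsRegSampling n Γ W) (hWU : W ⊆ U)
    (f : EuclideanSpace ℝ (Fin n) → ℂ) (hfc : Continuous f)
    (hfLp : MemLp f (ENNReal.ofReal p) volume)
    (hrep : ∀ x, f x = conv n f (⇑K) x) :
    Summable (fun γ : Γ => ‖f (γ : EuclideanSpace ℝ (Fin n))‖ ^ p) ∧
    (volume W).toReal ^ (-(1 / p)) * (1 - ε) *
        (eLpNorm f (ENNReal.ofReal p) volume).toReal ≤
      (∑' γ : Γ, ‖f (γ : EuclideanSpace ℝ (Fin n))‖ ^ p) ^ (1 / p) ∧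
    (∑' γ : Γ, ‖f (γ : EuclideanSpace ℝ (Fin n))‖ ^ p) ^ (1 / p) ≤
      (volume W).toReal ^ (-(1 / p)) * (1 + ε) *
        (eLpNorm f (ENNReal.ofReal p) volume).toReal := by
  classical
  obtain ⟨hΓc, hWm, hW0, hWb, hcover, hdisj⟩ := hreg
  haveI : Countable ↥Γ := hΓc.to_subtype
  have hp0 : (0:ℝ) < p := lt_of_lt_of_le one_pos hp
  have hp0' : (0:ℝ) < 1 / p := by positivity
  set q : ℝ≥0∞ := ENNReal.ofReal p with hqdef
  have hq0 : q ≠ 0 := by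
    simp only [hqdef, ne_eq, ENNReal.ofReal_eq_zero, not_le]; linarith
  have hqT : q ≠ ∞ := ENNReal.ofReal_ne_top
  have hq1 : 1 ≤ q := ENNReal.one_le_ofReal.2 hp
  have hqto : q.toReal = p := ENNReal.toReal_ofReal (le_of_lt hp0)
  -- basic objects
  set Φ : EuclideanSpace ℝ (Fin n) → ℝ≥0∞ :=
    fun x => ⨆ y ∈ U, (‖K x - K (x - y)‖₊ : ℝ≥0∞) with hΦdef
  have hΦmeas : Measurable Φ := osc_measurable ⇑K K.continuous U
  set F : EuclideanSpace ℝ (Fin n) → ℝ≥0∞ := fun x => (‖f x‖₊ : ℝ≥0∞) with hFdef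
  have hFmeas : Measurable F := hfc.measurable.nnnorm.coe_nnreal_ennreal
  set C : EuclideanSpace ℝ (Fin n) → ℝ≥0∞ := fun x => ∫⁻ y, F y * Φ (x - y) with hCdef
  have hCmeas : Measurable C :=
    Measurable.lintegral_prod_right'
      (f := fun z : EuclideanSpace ℝ (Fin n) × EuclideanSpace ℝ (Fin n) => F z.2 * Φ (z.1 - z.2))
      ((hFmeas.comp measurable_snd).mul (hΦmeas.comp (measurable_fst.sub measurable_snd)))
  -- tiles
  set T : EuclideanSpace ℝ (Fin n) → Set (EuclideanSpace ℝ (Fin n)) :=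
    fun γ => (fun x => x - γ) ⁻¹' W with hTdef
  have hTeq : ∀ γ : EuclideanSpace ℝ (Fin n), (γ + ·) '' W = T γ := by
    intro γ; ext x
    constructor
    · rintro ⟨w, hw, rfl⟩; simpa [hTdef] using hw
    · intro hx; exact ⟨x - γ, hx, by simp⟩
  have hTm : ∀ γ : EuclideanSpace ℝ (Fin n), MeasurableSet (T γ) := fun γ =>
    (measurable_id.sub measurable_const) hWm
  have hTvol : ∀ γ : EuclideanSpace ℝ (Fin n), volume (T γ) = volume W := by
    intro γ
    have : T γ = (fun x => x + (-γ)) ⁻¹' W := by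
      ext x; simp [hTdef, sub_eq_add_neg]
    rw [this, measure_preimage_add_right]
  -- integrability of the convolution integrand
  have hconj : q.HolderConjugate q.conjExponent := ENNReal.HolderConjugate.conjExponent hq1
  have hint : ∀ z : EuclideanSpace ℝ (Fin n),
      Integrable (fun y => f y * K (z - y)) (volume : Measure (EuclideanSpace ℝ (Fin n))) := by
    intro z
    have hK1 : MemLp (fun y : EuclideanSpace ℝ (Fin n) => K (z - y)) q.conjExponent volume :=
      (schwartz_memLp K q.conjExponent (by rw [ENNReal.conjExponent]; exact le_self_add)).comp_measurePreserving
        (mp_sub_left z)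
    have h111 : (1:ℝ≥0∞) / 1 = 1 / q.conjExponent + 1 / q := by
      rw [one_div, inv_one, one_div, one_div, add_comm]
      exact (ENNReal.holderConjugate_iff.1 hconj).symm
    have h2 : MemLp ((fun y : EuclideanSpace ℝ (Fin n) => K (z - y)) • f) 1 volume :=
      by haveI := hconj; exact MemLp.smul hfLp hK1
    have h3 := memLp_one_iff_integrable.1 h2
    have h4 : ((fun y : EuclideanSpace ℝ (Fin n) => K (z - y)) • f)
        = fun y => f y * K (z - y) := by
      funext y; simp [Pi.smul_apply, smul_eq_mul, mul_comm]
    rwa [h4] at h3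
  -- key oscillation estimate
  have hkey : ∀ γ x : EuclideanSpace ℝ (Fin n), x ∈ T γ →
      (‖f γ - f x‖₊ : ℝ≥0∞) ≤ C x := by
    intro γ x hx
    have hxW : x - γ ∈ W := hx
    have hfx : f x = ∫ y, f y * K (x - y) := hrep x
    have hfγ : f γ = ∫ y, f y * K (γ - y) := hrep γ
    have hsub : f γ - f x = ∫ y, (f y * K (γ - y) - f y * K (x - y)) := by
      rw [hfγ, hfx, integral_sub (hint γ) (hint x)]
    rw [hsub]
    refine le_trans (enorm_integral_le_lintegral_enorm _) ?_
    refine lintegral_mono fun y => ?_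
    have h1 : f y * K (γ - y) - f y * K (x - y) = f y * (K (γ - y) - K (x - y)) := by ring
    rw [h1, enorm_mul, enorm_eq_nnnorm, enorm_eq_nnnorm]
    refine mul_le_mul_right ?_ _
    have h2 : (x - y) - (x - γ) = γ - y := by abel
    have h3 : (‖K (γ - y) - K (x - y)‖₊ : ℝ≥0∞)
        = (‖K (x - y) - K ((x - y) - (x - γ))‖₊ : ℝ≥0∞) := by
      rw [h2, ← neg_sub (K (x - y)), nnnorm_neg]
    rw [h3]
    exact le_iSup₂ (f := fun u (_ : u ∈ U) =>
      (‖K (x - y) - K ((x - y) - u)‖₊ : ℝ≥0∞)) (x - γ) (hWU hxW)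
  -- a.e. each point lies in exactly one tile
  have hcover' : volume ((Set.univ : Set (EuclideanSpace ℝ (Fin n))) \ ⋃ γ ∈ Γ, T γ) = 0 := by
    have : (⋃ γ ∈ Γ, (γ + ·) '' W) = ⋃ γ ∈ Γ, T γ := by
      refine Set.iUnion₂_congr fun γ _ => hTeq γ
    rwa [this] at hcover
  have hbad : volume (⋃ (γ : Γ) (γ' : Γ) (_ : γ ≠ γ'), (T γ ∩ T γ')) = 0 := by
    refine measure_iUnion_null fun γ => measure_iUnion_null fun γ' => measure_iUnion_null
      fun hne => ?_
    rw [← hTeq, ← hTeq]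
    exact hdisj γ.2 γ'.2 (fun hval => hne (Subtype.ext hval))
  have hae : ∀ᵐ x : EuclideanSpace ℝ (Fin n),
      ∃ γ : Γ, x ∈ T γ ∧ ∀ γ' : Γ, x ∈ T γ' → γ' = γ := by
    have h1 : ∀ᵐ x : EuclideanSpace ℝ (Fin n), x ∈ ⋃ γ ∈ Γ, T γ := by
      rw [ae_iff]
      have : {x : EuclideanSpace ℝ (Fin n) | ¬ x ∈ ⋃ γ ∈ Γ, T γ}
          = (Set.univ : Set (EuclideanSpace ℝ (Fin n))) \ ⋃ γ ∈ Γ, T γ := by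
        ext x; simp
      rw [this]; exact hcover'
    have h2 : ∀ᵐ x : EuclideanSpace ℝ (Fin n),
        x ∉ ⋃ (γ : Γ) (γ' : Γ) (_ : γ ≠ γ'), (T γ ∩ T γ') := by
      rw [ae_iff]
      have : {x : EuclideanSpace ℝ (Fin n) |
          ¬ x ∉ ⋃ (γ : Γ) (γ' : Γ) (_ : γ ≠ γ'), (T γ ∩ T γ')}
          = ⋃ (γ : Γ) (γ' : Γ) (_ : γ ≠ γ'), (T γ ∩ T γ') := by
        ext x; simp
      rw [this]; exact hbad
    filter_upwards [h1, h2] with x hx1 hx2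
    obtain ⟨γ, hγΓ, hxγ⟩ := Set.mem_iUnion₂.1 hx1
    refine ⟨⟨γ, hγΓ⟩, hxγ, fun γ' hx' => ?_⟩
    by_contra hne
    exact hx2 (Set.mem_iUnion.2 ⟨γ', Set.mem_iUnion.2 ⟨⟨γ, hγΓ⟩,
      Set.mem_iUnion.2 ⟨hne, ⟨hx', hxγ⟩⟩⟩⟩)
  -- the sampled step function
  set g : EuclideanSpace ℝ (Fin n) → ℝ≥0∞ := fun x =>
    ∑' γ : Γ, Set.indicator (T γ) (fun _ => (‖f (γ : EuclideanSpace ℝ (Fin n))‖₊ : ℝ≥0∞)) x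
    with hgdef
  have hgmeas : Measurable g := by
    refine Measurable.ennreal_tsum fun γ => ?_
    exact measurable_const.indicator (hTm _)
  have haeh : ∀ᵐ x : EuclideanSpace ℝ (Fin n), (g x ≤ F x + C x) ∧ (F x ≤ g x + C x) ∧
      g x ^ p = ∑' γ : Γ, Set.indicator (T γ)
        (fun _ => (‖f (γ : EuclideanSpace ℝ (Fin n))‖₊ : ℝ≥0∞) ^ p) x := by
    filter_upwards [hae] with x hx
    obtain ⟨γ, hxγ, huniq⟩ := hx
    have hgx : g x = (‖f (γ : EuclideanSpace ℝ (Fin n))‖₊ : ℝ≥0∞) := by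
      simp only [hgdef]
      rw [tsum_eq_single γ (fun γ' hne =>
        Set.indicator_of_notMem (fun hx' => hne (huniq γ' hx')) _)]
      exact Set.indicator_of_mem hxγ _
    have hkey1 : (‖f (γ : EuclideanSpace ℝ (Fin n)) - f x‖₊ : ℝ≥0∞) ≤ C x :=
      hkey γ x hxγ
    refine ⟨?_, ?_, ?_⟩
    · rw [hgx]
      calc (‖f (γ : EuclideanSpace ℝ (Fin n))‖₊ : ℝ≥0∞)
          ≤ (‖f x‖₊ : ℝ≥0∞) + (‖f (γ : EuclideanSpace ℝ (Fin n)) - f x‖₊ : ℝ≥0∞) := by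
            rw [← ENNReal.coe_add]
            apply ENNReal.coe_le_coe.2
            have : f (γ : EuclideanSpace ℝ (Fin n))
                = f x + (f (γ : EuclideanSpace ℝ (Fin n)) - f x) := by ring
            nth_rewrite 1 [this]; exact nnnorm_add_le _ _
        _ ≤ F x + C x := add_le_add le_rfl hkey1
    · rw [hgx]
      calc F x = (‖f x‖₊ : ℝ≥0∞) := rfl
        _ ≤ (‖f (γ : EuclideanSpace ℝ (Fin n))‖₊ : ℝ≥0∞)
            + (‖f x - f (γ : EuclideanSpace ℝ (Fin n))‖₊ : ℝ≥0∞) := by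
            rw [← ENNReal.coe_add]
            apply ENNReal.coe_le_coe.2
            have : f x = f (γ : EuclideanSpace ℝ (Fin n))
                + (f x - f (γ : EuclideanSpace ℝ (Fin n))) := by ring
            nth_rewrite 1 [this]
            exact nnnorm_add_le _ _
        _ ≤ (‖f (γ : EuclideanSpace ℝ (Fin n))‖₊ : ℝ≥0∞) + C x := by
            refine add_le_add le_rfl ?_
            rw [show f x - f (γ : EuclideanSpace ℝ (Fin n))
              = -(f (γ : EuclideanSpace ℝ (Fin n)) - f x) by ring, nnnorm_neg]
            exact hkey1
    · rw [hgx]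
      rw [tsum_eq_single γ (fun γ' hne =>
        Set.indicator_of_notMem (fun hx' => hne (huniq γ' hx')) _)]
      rw [Set.indicator_of_mem hxγ]
  -- value of the integral of g ^ p
  set S : ℝ≥0∞ := ∑' γ : Γ, (‖f (γ : EuclideanSpace ℝ (Fin n))‖₊ : ℝ≥0∞) ^ p with hSdef
  have hJ : ∫⁻ x, g x ^ p = S * volume W := by
    have h1 : ∫⁻ x, g x ^ p = ∫⁻ x, ∑' γ : Γ, Set.indicator (T γ)
        (fun _ => (‖f (γ : EuclideanSpace ℝ (Fin n))‖₊ : ℝ≥0∞) ^ p) x :=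
      lintegral_congr_ae (haeh.mono fun x hx => hx.2.2)
    rw [h1, lintegral_tsum (fun γ => (measurable_const.indicator (hTm _)).aemeasurable)]
    have h2 : ∀ γ : Γ, ∫⁻ x, Set.indicator (T γ)
        (fun _ => (‖f (γ : EuclideanSpace ℝ (Fin n))‖₊ : ℝ≥0∞) ^ p) x
        = (‖f (γ : EuclideanSpace ℝ (Fin n))‖₊ : ℝ≥0∞) ^ p * volume W := by
      intro γ
      rw [lintegral_indicator_const (hTm _), hTvol]
    simp_rw [h2]
    rw [ENNReal.tsum_mul_right]
  -- L^p norm as a lintegral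
  set I : ℝ≥0∞ := ∫⁻ x, F x ^ p with hIdef
  have hAI : eLpNorm f q volume = I ^ (1 / p) := by
    rw [eLpNorm_eq_lintegral_rpow_enorm_toReal hq0 hqT, hqto]; rfl
  have hIT : I ≠ ∞ := by
    have h2 := hfLp.2
    rw [hAI, ENNReal.rpow_lt_top_iff_of_pos hp0'] at h2
    exact h2.ne
  have hAne : I ^ (1 / p) ≠ ∞ := by
    rw [← hAI]; exact hfLp.2.ne
  -- Young bound
  have hCbound : (∫⁻ x, C x ^ p) ^ (1 / p) ≤ ENNReal.ofReal ε * I ^ (1 / p) := by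
    refine le_trans (young_L1 p hp F Φ hFmeas hΦmeas) ?_
    exact mul_le_mul' hosc le_rfl
  have hεAne : ENNReal.ofReal ε * I ^ (1 / p) ≠ ∞ :=
    ENNReal.mul_ne_top ENNReal.ofReal_ne_top hAne
  -- Minkowski, upper bound
  have hup : (∫⁻ x, g x ^ p) ^ (1 / p)
      ≤ I ^ (1 / p) + ENNReal.ofReal ε * I ^ (1 / p) := by
    have h1 : (∫⁻ x, g x ^ p) ^ (1 / p) ≤ (∫⁻ x, (F x + C x) ^ p) ^ (1 / p) := by
      refine ENNReal.rpow_le_rpow ?_ (le_of_lt hp0')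
      refine lintegral_mono_ae (haeh.mono fun x hx => ?_)
      exact ENNReal.rpow_le_rpow hx.1 (le_of_lt hp0)
    refine h1.trans ?_
    have h2 := ENNReal.lintegral_Lp_add_le (μ := volume) hFmeas.aemeasurable hCmeas.aemeasurable hp
    refine le_trans (le_of_eq ?_) (h2.trans (add_le_add le_rfl hCbound))
    rfl
  -- Minkowski, lower bound
  have hlow : I ^ (1 / p)
      ≤ (∫⁻ x, g x ^ p) ^ (1 / p) + ENNReal.ofReal ε * I ^ (1 / p) := by
    have h1 : I ^ (1 / p) ≤ (∫⁻ x, (g x + C x) ^ p) ^ (1 / p) := by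
      refine ENNReal.rpow_le_rpow ?_ (le_of_lt hp0')
      refine lintegral_mono_ae (haeh.mono fun x hx => ?_)
      exact ENNReal.rpow_le_rpow hx.2.1 (le_of_lt hp0)
    refine h1.trans ?_
    have h2 := ENNReal.lintegral_Lp_add_le (μ := volume) hgmeas.aemeasurable hCmeas.aemeasurable hp
    refine le_trans (le_of_eq ?_) (h2.trans (add_le_add le_rfl hCbound))
    rfl
  -- rewrite with S * volume W
  rw [hJ] at hup hlow
  have hup' : (S * volume W) ^ (1 / p) ≤ ENNReal.ofReal (1 + ε) * I ^ (1 / p) := by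
    rw [ENNReal.ofReal_add zero_le_one (le_of_lt hε0), ENNReal.ofReal_one, add_mul, one_mul]
    exact hup
  have hlow' : ENNReal.ofReal (1 - ε) * I ^ (1 / p) ≤ (S * volume W) ^ (1 / p) := by
    rw [ENNReal.ofReal_sub _ (le_of_lt hε0), ENNReal.ofReal_one,
      ENNReal.sub_mul (fun _ _ => hAne), one_mul]
    exact tsub_le_iff_right.2 hlow
  -- measure of W is finite and positive
  have hvW0 : volume W ≠ 0 := by
    obtain ⟨V, hVW, hVo, hV0⟩ := mem_nhds_iff.1 hW0
    exact ne_of_gt (lt_of_lt_of_le (hVo.measure_pos volume ⟨0, hV0⟩) (measure_mono hVW))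
  have hvWT : volume W ≠ ∞ := by
    obtain ⟨R, hR⟩ := hWb.subset_closedBall 0
    exact ((measure_mono hR).trans_lt measure_closedBall_lt_top).ne
  -- finiteness of S
  have hSWT : S * volume W ≠ ∞ := by
    intro hcon
    have : (S * volume W) ^ (1 / p) = ∞ := by
      rw [hcon]; exact ENNReal.top_rpow_of_pos hp0'
    rw [this] at hup'
    exact (lt_of_le_of_lt hup' (lt_top_iff_ne_top.2
      (ENNReal.mul_ne_top ENNReal.ofReal_ne_top hAne))).false
  have hST : S ≠ ∞ := by
    intro hcon
    apply hSWT
    rw [hcon, ENNReal.top_mul hvW0]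
  -- summability
  set s : Γ → ℝ≥0 := fun γ => ‖f (γ : EuclideanSpace ℝ (Fin n))‖₊ ^ p with hsdef
  have hScoe : S = ∑' γ : Γ, ((s γ : ℝ≥0∞)) := by
    rw [hSdef]
    refine tsum_congr fun γ => ?_
    rw [hsdef, ENNReal.coe_rpow_of_nonneg _ (le_of_lt hp0)]
  have hsum : Summable s := ENNReal.tsum_coe_ne_top_iff_summable.1 (hScoe ▸ hST)
  have hnorm_eq : ∀ γ : Γ, ‖f (γ : EuclideanSpace ℝ (Fin n))‖ ^ p = ((s γ : ℝ)) := by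
    intro γ
    rw [hsdef, NNReal.coe_rpow, coe_nnnorm]
  have hsum' : Summable (fun γ : Γ => ‖f (γ : EuclideanSpace ℝ (Fin n))‖ ^ p) := by
    simp_rw [hnorm_eq]
    exact NNReal.summable_coe.2 hsum
  have htsum : (∑' γ : Γ, ‖f (γ : EuclideanSpace ℝ (Fin n))‖ ^ p) = S.toReal := by
    simp_rw [hnorm_eq]
    rw [← NNReal.coe_tsum]
    rw [hScoe, ← ENNReal.coe_tsum hsum, ENNReal.coe_toReal]
  have hw0 : 0 < (volume W).toReal := ENNReal.toReal_pos hvW0 hvWT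
  have hwp : 0 < (volume W).toReal ^ (1 / p) := Real.rpow_pos_of_pos hw0 _
  have hS0 : (0:ℝ) ≤ S.toReal := ENNReal.toReal_nonneg
  have hAtoReal : (eLpNorm f q volume).toReal = (I ^ (1 / p)).toReal := by rw [hAI]
  have hupR : S.toReal ^ (1 / p) * (volume W).toReal ^ (1 / p)
      ≤ (1 + ε) * (eLpNorm f q volume).toReal := by
    have h2 := ENNReal.toReal_mono (ENNReal.mul_ne_top ENNReal.ofReal_ne_top hAne) hup'
    rw [ENNReal.toReal_mul, ENNReal.toReal_ofReal (by linarith)] at h2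
    rw [← ENNReal.toReal_rpow, ENNReal.toReal_mul,
      Real.mul_rpow hS0 ENNReal.toReal_nonneg] at h2
    rw [hAtoReal]
    exact h2
  have hlowR : (1 - ε) * (eLpNorm f q volume).toReal
      ≤ S.toReal ^ (1 / p) * (volume W).toReal ^ (1 / p) := by
    have hfin : (S * volume W) ^ (1 / p) ≠ ∞ :=
      ENNReal.rpow_ne_top_of_nonneg (le_of_lt hp0') hSWT
    have h2 := ENNReal.toReal_mono hfin hlow'
    rw [ENNReal.toReal_mul, ENNReal.toReal_ofReal (by linarith), ← hAtoReal] at h2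
    rw [← ENNReal.toReal_rpow, ENNReal.toReal_mul,
      Real.mul_rpow hS0 ENNReal.toReal_nonneg] at h2
    exact h2
  refine ⟨hsum', ?_, ?_⟩
  · rw [htsum, Real.rpow_neg (le_of_lt hw0), mul_assoc, inv_mul_le_iff₀ hwp]
    calc (1 - ε) * (eLpNorm f q volume).toReal
        ≤ S.toReal ^ (1 / p) * (volume W).toReal ^ (1 / p) := hlowR
      _ = (volume W).toReal ^ (1 / p) * S.toReal ^ (1 / p) := by ring
  · rw [htsum, Real.rpow_neg (le_of_lt hw0), mul_assoc]
    rw [le_inv_mul_iff₀ hwp]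
    calc (volume W).toReal ^ (1 / p) * S.toReal ^ (1 / p)
        = S.toReal ^ (1 / p) * (volume W).toReal ^ (1 / p) := by ring
      _ ≤ (1 + ε) * (eLpNorm f q volume).toReal := hupR
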